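/- Let f and g be continuous functions from ℝ to ℂ for which there exist constants C_f, C_g > 0 and positive integers N_f, N_g such that |f(x)| ≤ C_f(1+|x|)^{N_f} and |g(x)| ≤ C_g(1+|x|)^{N_g} for all x ∈ ℝ. If ∫_{-∞}^{∞} f(x) e^{-iωx} e^{-x²} dx = ∫_{-∞}^{∞} g(x) e^{-iωx} e^{-x²} dx for every real constant ω, then f(x) = g(x) for all x ∈ ℝ. -/

import Mathlib

open MeasureTheory Real Filter FourierTransform

open Set in
lemma integrable_abs_pow_mul_exp_neg_sq (k : ℕ) :
    Integrable (fun x : ℝ => |x| ^ k * Real.exp (-x ^ 2)) := by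
  have h0 : IntegrableOn (fun x : ℝ => |x| ^ k * Real.exp (-x ^ 2)) (Ioi 0) := by
    refine ((integrableOn_rpow_mul_exp_neg_mul_sq one_pos (s := (k : ℝ))
      (lt_of_lt_of_le neg_one_lt_zero (Nat.cast_nonneg k))).congr_fun ?_ measurableSet_Ioi)
    intro x hx
    show x ^ (k : ℝ) * Real.exp (-1 * x ^ 2) = |x| ^ k * Real.exp (-x ^ 2)
    rw [Real.rpow_natCast, abs_of_pos hx, neg_one_mul]
  rw [← integrableOn_univ, ← @Iio_union_Ici _ _ (0 : ℝ), integrableOn_union,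
    integrableOn_Ici_iff_integrableOn_Ioi]
  refine ⟨?_, h0⟩
  rw [← (Measure.measurePreserving_neg (volume : Measure ℝ)).integrableOn_comp_preimage
      (Homeomorph.neg ℝ).measurableEmbedding]
  simpa [Function.comp_def] using h0

/-- Polynomial times gaussian is integrable. -/
lemma integrable_poly_gaussian (N : ℕ) :
    Integrable (fun x : ℝ ↦ (1 + |x|) ^ N * Real.exp (-x ^ 2)) := by
  have key : ∀ x : ℝ, (1 + |x|) ^ N * Real.exp (-x ^ 2)
      = ∑ k ∈ Finset.range (N + 1), (N.choose k : ℝ) * (|x| ^ k * Real.exp (-x ^ 2)) := by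
    intro x
    rw [add_comm (1 : ℝ) |x|, add_pow, Finset.sum_mul]
    refine Finset.sum_congr rfl fun k hk => ?_
    simp only [one_pow, mul_one]
    ring
  simp_rw [key]
  apply integrable_finset_sum
  intro k hk
  exact (integrable_abs_pow_mul_exp_neg_sq k).const_mul _

/-- Integrability of a function of polynomial growth times the test function. -/
lemma integrable_aux (f : ℝ → ℂ) (hf : Continuous f) (C : ℝ) (N : ℕ)
    (hfb : ∀ x : ℝ, ‖f x‖ ≤ C * (1 + |x|) ^ N) (ω : ℝ) :
    Integrable (fun x : ℝ ↦
      f x * Complex.exp (-(Complex.I * ω * x)) * Complex.exp (-((x : ℂ) ^ 2))) := by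
  apply Integrable.mono' ((integrable_poly_gaussian N).const_mul C)
  · apply Continuous.aestronglyMeasurable
    fun_prop
  · filter_upwards with x
    have h1 : ‖Complex.exp (-(Complex.I * ω * x))‖ = 1 := by
      rw [Complex.norm_exp]
      simp
    have h2 : ‖Complex.exp (-((x : ℂ) ^ 2))‖ = Real.exp (-x ^ 2) := by
      rw [Complex.norm_exp]
      norm_num [← Complex.ofReal_pow]
    rw [norm_mul, norm_mul, h1, h2, mul_one]
    have := hfb x
    have hexp : (0 : ℝ) < Real.exp (-x ^ 2) := Real.exp_pos _
    calc ‖f x‖ * Real.exp (-x ^ 2) ≤ (C * (1 + |x|) ^ N) * Real.exp (-x ^ 2) := by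
          exact mul_le_mul_of_nonneg_right this hexp.le
      _ = C * ((1 + |x|) ^ N * Real.exp (-x ^ 2)) := by ring

/-- Two continuous functions of polynomial growth which have the same integrals against
all the test functions `x ↦ e^{-iωx} e^{-x²}` are equal everywhere. -/
theorem eq_of_integral_against_gaussian_modulations_eq (f g : ℝ → ℂ)
    (hf : Continuous f) (hg : Continuous g)
    (Cf Cg : ℝ) (Nf Ng : ℕ) (hCf : 0 < Cf) (hCg : 0 < Cg) (hNf : 0 < Nf) (hNg : 0 < Ng)
    (hfb : ∀ x : ℝ, ‖f x‖ ≤ Cf * (1 + |x|) ^ Nf)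
    (hgb : ∀ x : ℝ, ‖g x‖ ≤ Cg * (1 + |x|) ^ Ng)
    (h : ∀ ω : ℝ,
        ∫ x : ℝ, f x * Complex.exp (-(Complex.I * ω * x)) * Complex.exp (-((x : ℂ) ^ 2))
          = ∫ x : ℝ, g x * Complex.exp (-(Complex.I * ω * x)) * Complex.exp (-((x : ℂ) ^ 2))) :
    ∀ x : ℝ, f x = g x := by
  set F : ℝ → ℂ := fun x ↦ (f x - g x) * Complex.exp (-((x : ℂ) ^ 2)) with hF
  -- F is continuous
  have hFc : Continuous F := by fun_prop
  -- F is integrable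
  have hFi : Integrable F := by
    have h1 := integrable_aux f hf Cf Nf hfb 0
    have h2 := integrable_aux g hg Cg Ng hgb 0
    simp only [Complex.ofReal_zero, mul_zero, zero_mul, neg_zero, Complex.exp_zero,
      mul_one] at h1 h2
    exact (h1.sub h2).congr (Filter.Eventually.of_forall fun x => by
      simp only [Pi.sub_apply, hF]; ring)
  -- the Fourier transform of F vanishes
  have hFT : 𝓕 F = 0 := by
    ext ω
    rw [Real.fourier_eq']
    simp only [RCLike.inner_apply, starRingEnd_apply, star_trivial, smul_eq_mul, Pi.zero_apply]
    have h1 := integrable_aux f hf Cf Nf hfb (2 * π * ω)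
    have h2 := integrable_aux g hg Cg Ng hgb (2 * π * ω)
    have key : ∀ x : ℝ, Complex.exp ((↑(-2 * π * (ω * x)) * Complex.I)) * F x
        = f x * Complex.exp (-(Complex.I * (2 * π * ω : ℝ) * x)) * Complex.exp (-((x : ℂ) ^ 2))
          - g x * Complex.exp (-(Complex.I * (2 * π * ω : ℝ) * x))
            * Complex.exp (-((x : ℂ) ^ 2)) := by
      intro x
      have : (↑(-2 * π * (ω * x)) * Complex.I)
          = -(Complex.I * (2 * π * ω : ℝ) * x) := by
        push_cast
        ring
      rw [this, hF]
      ring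
    simp_rw [key]
    rw [integral_sub h1 h2, h (2 * π * ω), sub_self]
  -- apply Fourier inversion
  intro x
  have hinv := hFi.fourierInv_fourier_eq (v := x) (by rw [hFT]; exact integrable_zero _ _ _)
    hFc.continuousAt
  rw [hFT] at hinv
  have h0 : 𝓕⁻ (0 : ℝ → ℂ) x = 0 := by
    rw [Real.fourierInv_eq]
    simp
  rw [h0] at hinv
  have hFx : F x = 0 := hinv.symm
  have hexp : Complex.exp (-((x : ℂ) ^ 2)) ≠ 0 := Complex.exp_ne_zero _
  rw [hF] at hFx
  rcases mul_eq_zero.mp hFx with h' | h'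
  · exact sub_eq_zero.mp h'
  · exact absurd h' hexp
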